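/- arXiv:2509.02299 — 3 statements merged into one kernel-verified Lean document; each statement's English description precedes it below -/
import Mathlib

section
/- For all real t with t > 1/e, the function G(t) = t - 1 - log t satisfies |G(t)| ≤ 3(√t - 1)². -/
private lemma F_hasDeriv (x : ℝ) (hx : 0 < x) :
    HasDerivAt (fun x : ℝ => 2*x^2 - 6*x + 4 + 2*Real.log x) (4*x - 6 + 2/x) x := by
  have h1 : HasDerivAt (fun x : ℝ => 2*x^2 - 6*x + 4) (4*x - 6) x := by
    have := (((hasDerivAt_pow 2 x).const_mul 2).sub ((hasDerivAt_id x).const_mul 6)).add_const 4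
    simpa using this.congr_deriv (by ring)
  have h2 := (Real.hasDerivAt_log (ne_of_gt hx)).const_mul 2
  have := h1.add h2
  exact this.congr_deriv (by field_simp)

private lemma F_nonneg (s : ℝ) (hs : 1/2 ≤ s) :
    0 ≤ 2*s^2 - 6*s + 4 + 2*Real.log s := by
  set F : ℝ → ℝ := fun x => 2*x^2 - 6*x + 4 + 2*Real.log x with hF
  have hF1 : F 1 = 0 := by simp [hF, Real.log_one]; norm_num
  rcases le_or_gt s 1 with h1 | h1
  · have hanti : AntitoneOn F (Set.Icc (1/2 : ℝ) 1) := by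
      apply antitoneOn_of_deriv_nonpos (convex_Icc _ _)
      · intro x hx
        have hx0 : (0:ℝ) < x := lt_of_lt_of_le (by norm_num) hx.1
        exact (F_hasDeriv x hx0).continuousAt.continuousWithinAt
      · intro x hx
        rw [interior_Icc] at hx
        have hx0 : (0:ℝ) < x := lt_trans (by norm_num) hx.1
        exact (F_hasDeriv x hx0).differentiableAt.differentiableWithinAt
      · intro x hx
        rw [interior_Icc] at hx
        have hx0 : (0:ℝ) < x := lt_trans (by norm_num) hx.1
        rw [(F_hasDeriv x hx0).deriv]
        have heq : 4*x - 6 + 2/x = 2*(2*x-1)*(x-1)/x := by field_simp; ring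
        rw [heq]
        apply div_nonpos_of_nonpos_of_nonneg _ hx0.le
        nlinarith [hx.1, hx.2]
    have := hanti (Set.mem_Icc.mpr ⟨hs, h1⟩) (Set.mem_Icc.mpr ⟨by norm_num, le_refl 1⟩) h1
    rw [hF1] at this
    exact this
  · have hmono : MonotoneOn F (Set.Ici (1:ℝ)) := by
      apply monotoneOn_of_deriv_nonneg (convex_Ici _)
      · intro x hx
        have hx0 : (0:ℝ) < x := lt_of_lt_of_le (by norm_num) hx
        exact (F_hasDeriv x hx0).continuousAt.continuousWithinAt
      · intro x hx
        rw [interior_Ici] at hx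
        have hx0 : (0:ℝ) < x := lt_trans (by norm_num) hx
        exact (F_hasDeriv x hx0).differentiableAt.differentiableWithinAt
      · intro x hx
        rw [interior_Ici] at hx
        have hx0 : (0:ℝ) < x := lt_trans (by norm_num) hx
        rw [(F_hasDeriv x hx0).deriv]
        have heq : 4*x - 6 + 2/x = 2*(2*x-1)*(x-1)/x := by field_simp; ring
        rw [heq]
        apply div_nonneg _ hx0.le
        nlinarith [Set.mem_Ioi.mp hx]
    have := hmono (Set.mem_Ici.mpr (le_refl 1)) (Set.mem_Ici.mpr h1.le) h1.le
    rw [hF1] at this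
    exact this

theorem G_bound_large (t : ℝ) (ht : t > 1 / Real.exp 1) :
    |t - 1 - Real.log t| ≤ 3 * (Real.sqrt t - 1) ^ 2 := by
  have he : Real.exp 1 < 4 := by
    have := Real.exp_one_lt_d9
    linarith
  have he0 : (0:ℝ) < Real.exp 1 := Real.exp_pos 1
  have ht4 : (1:ℝ)/4 < t := by
    have : (1:ℝ)/4 < 1 / Real.exp 1 := by
      apply one_div_lt_one_div_of_lt he0 he
    linarith
  have ht0 : 0 < t := by linarith
  have hlog : Real.log t ≤ t - 1 := Real.log_le_sub_one_of_pos ht0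
  rw [abs_of_nonneg (by linarith)]
  set s := Real.sqrt t with hsdef
  have hs2 : s^2 = t := Real.sq_sqrt ht0.le
  have hslog : Real.log t = 2 * Real.log s := by
    rw [← hs2, Real.log_pow]
    push_cast
    ring
  have hshalf : 1/2 ≤ s := by
    have : Real.sqrt (1/4) ≤ s := Real.sqrt_le_sqrt (by linarith)
    have h14 : Real.sqrt (1/4 : ℝ) = 1/2 := by
      rw [show (1/4:ℝ) = (1/2)^2 by norm_num, Real.sqrt_sq (by norm_num)]
    linarith [h14 ▸ this]
  have hkey := F_nonneg s hshalf
  nlinarith [hkey, hs2, hslog]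
end

section
/- For a, b > 0, one has (√a - √b)² ≤ (1/4)·max(a,b)·(log(a/b))². -/
theorem sqrt_diff_sq_le_log_sq (a b : ℝ) (ha : 0 < a) (hb : 0 < b) :
    (Real.sqrt a - Real.sqrt b) ^ 2 ≤ 1 / 4 * (max a b * (Real.log (a / b)) ^ 2) := by
  wlog hab : b ≤ a with H
  · have h := H b a hb ha (le_of_not_ge hab)
    have hlog : Real.log (a / b) ^ 2 = Real.log (b / a) ^ 2 := by
      rw [Real.log_div ha.ne' hb.ne', Real.log_div hb.ne' ha.ne']; ring
    rw [max_comm, hlog]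
    have hsym : (Real.sqrt a - Real.sqrt b) ^ 2 = (Real.sqrt b - Real.sqrt a) ^ 2 := by ring
    rw [hsym]; exact h
  · rw [max_eq_left hab]
    have hba : (0:ℝ) < b / a := div_pos hb ha
    have h1 : Real.log (Real.sqrt (b / a)) ≤ Real.sqrt (b / a) - 1 :=
      Real.log_le_sub_one_of_pos (Real.sqrt_pos.mpr hba)
    rw [Real.log_sqrt hba.le] at h1
    have hsd : Real.sqrt (b / a) = Real.sqrt b / Real.sqrt a := Real.sqrt_div hb.le a
    have hsa : (0:ℝ) < Real.sqrt a := Real.sqrt_pos.mpr ha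
    have key : Real.sqrt a - Real.sqrt b ≤ Real.sqrt a * (1 / 2 * Real.log (a / b)) := by
      have h2 : 1 - Real.sqrt b / Real.sqrt a ≤ 1 / 2 * Real.log (a / b) := by
        rw [Real.log_div ha.ne' hb.ne']
        rw [Real.log_div hb.ne' ha.ne'] at h1
        rw [hsd] at h1
        linarith
      have := mul_le_mul_of_nonneg_left h2 hsa.le
      calc Real.sqrt a - Real.sqrt b
          = Real.sqrt a * (1 - Real.sqrt b / Real.sqrt a) := by
            field_simp
        _ ≤ Real.sqrt a * (1 / 2 * Real.log (a / b)) := this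
    have hnn : 0 ≤ Real.sqrt a - Real.sqrt b :=
      sub_nonneg.mpr (Real.sqrt_le_sqrt hab)
    have := pow_le_pow_left₀ hnn key 2
    calc (Real.sqrt a - Real.sqrt b) ^ 2
        ≤ (Real.sqrt a * (1 / 2 * Real.log (a / b))) ^ 2 := this
      _ = 1 / 4 * (a * Real.log (a / b) ^ 2) := by
          rw [mul_pow, mul_pow, Real.sq_sqrt ha.le]; ring
end

section
/- Let σ : ℝ → (0,1) be such that √σ is L-Lipschitz and σ ≤ 1. Then for all r₁, r₂ ∈ [0, R] (R > 0) and all bounded functions w₁, w₂ on a set Z, the sup-norm bound ‖√(r₁·σ∘w₁) - √(r₂·σ∘w₂)‖_∞ ≤ √|r₁ - r₂| + L·√R·‖w₁ - w₂‖_∞ holds. -/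
lemma sqrt_add_le' {x y : ℝ} (hx : 0 ≤ x) (hy : 0 ≤ y) :
    Real.sqrt (x + y) ≤ Real.sqrt x + Real.sqrt y := by
  rw [show Real.sqrt x + Real.sqrt y
      = Real.sqrt ((Real.sqrt x + Real.sqrt y) ^ 2) from
      (Real.sqrt_sq (by positivity)).symm]
  apply Real.sqrt_le_sqrt
  have hxx := Real.sq_sqrt hx
  have hyy := Real.sq_sqrt hy
  nlinarith [Real.sqrt_nonneg x, Real.sqrt_nonneg y]

lemma abs_sqrt_sub_sqrt {a b : ℝ} (ha : 0 ≤ a) (hb : 0 ≤ b) :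
    |Real.sqrt a - Real.sqrt b| ≤ Real.sqrt |a - b| := by
  wlog h : b ≤ a generalizing a b
  · rw [abs_sub_comm, abs_sub_comm a b]; exact this hb ha (le_of_not_ge h)
  rw [abs_of_nonneg (sub_nonneg.mpr (Real.sqrt_le_sqrt h)),
    abs_of_nonneg (by linarith : (0:ℝ) ≤ a - b)]
  have : Real.sqrt a ≤ Real.sqrt b + Real.sqrt (a - b) := by
    calc Real.sqrt a = Real.sqrt (b + (a - b)) := by ring_nf
    _ ≤ _ := sqrt_add_le' hb (by linarith)
  linarith

theorem sup_norm_sqrt_bound {Z : Type*} [Nonempty Z]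
    (σ : ℝ → ℝ) (L : ℝ) (hL : 0 ≤ L)
    (hrange : ∀ t, σ t ∈ Set.Ioo (0 : ℝ) 1)
    (hlip : ∀ s t, |Real.sqrt (σ s) - Real.sqrt (σ t)| ≤ L * |s - t|)
    (R : ℝ) (hR : 0 < R) (r₁ r₂ : ℝ) (hr₁ : r₁ ∈ Set.Icc 0 R) (hr₂ : r₂ ∈ Set.Icc 0 R)
    (w₁ w₂ : Z → ℝ) (hb₁ : ∃ C, ∀ z, |w₁ z| ≤ C) (hb₂ : ∃ C, ∀ z, |w₂ z| ≤ C) :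
    ∀ z : Z, |Real.sqrt (r₁ * σ (w₁ z)) - Real.sqrt (r₂ * σ (w₂ z))|
      ≤ Real.sqrt |r₁ - r₂| + L * Real.sqrt R * ⨆ z' : Z, |w₁ z' - w₂ z'| := by
  intro z
  obtain ⟨C₁, hC₁⟩ := hb₁
  obtain ⟨C₂, hC₂⟩ := hb₂
  have hbdd : BddAbove (Set.range fun z' : Z => |w₁ z' - w₂ z'|) := by
    refine ⟨C₁ + C₂, ?_⟩
    rintro x ⟨z', rfl⟩
    calc |w₁ z' - w₂ z'| ≤ |w₁ z'| + |w₂ z'| := abs_sub _ _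
    _ ≤ C₁ + C₂ := add_le_add (hC₁ z') (hC₂ z')
  have hsup : |w₁ z - w₂ z| ≤ ⨆ z' : Z, |w₁ z' - w₂ z'| := le_ciSup hbdd z
  obtain ⟨hσ1, hσ2⟩ := hrange (w₁ z)
  obtain ⟨hσ1', hσ2'⟩ := hrange (w₂ z)
  have h01 : 0 ≤ r₁ := hr₁.1
  have h02 : 0 ≤ r₂ := hr₂.1
  have key : |Real.sqrt (r₁ * σ (w₁ z)) - Real.sqrt (r₂ * σ (w₂ z))|
      ≤ |Real.sqrt (r₁ * σ (w₁ z)) - Real.sqrt (r₂ * σ (w₁ z))|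
        + |Real.sqrt (r₂ * σ (w₁ z)) - Real.sqrt (r₂ * σ (w₂ z))| := by
    exact abs_sub_le _ _ _
  have t1 : |Real.sqrt (r₁ * σ (w₁ z)) - Real.sqrt (r₂ * σ (w₁ z))|
      ≤ Real.sqrt |r₁ - r₂| := by
    rw [Real.sqrt_mul h01, Real.sqrt_mul h02, ← sub_mul, abs_mul,
      abs_of_nonneg (Real.sqrt_nonneg _)]
    calc |Real.sqrt r₁ - Real.sqrt r₂| * Real.sqrt (σ (w₁ z))
        ≤ |Real.sqrt r₁ - Real.sqrt r₂| * 1 := by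
          apply mul_le_mul_of_nonneg_left _ (abs_nonneg _)
          rw [show (1:ℝ) = Real.sqrt 1 from (Real.sqrt_one).symm]
          exact Real.sqrt_le_sqrt hσ2.le
    _ = |Real.sqrt r₁ - Real.sqrt r₂| := mul_one _
    _ ≤ Real.sqrt |r₁ - r₂| := abs_sqrt_sub_sqrt h01 h02
  have t2 : |Real.sqrt (r₂ * σ (w₁ z)) - Real.sqrt (r₂ * σ (w₂ z))|
      ≤ L * Real.sqrt R * ⨆ z' : Z, |w₁ z' - w₂ z'| := by
    rw [Real.sqrt_mul h02, Real.sqrt_mul h02, ← mul_sub, abs_mul,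
      abs_of_nonneg (Real.sqrt_nonneg _)]
    have hsr : Real.sqrt r₂ ≤ Real.sqrt R := Real.sqrt_le_sqrt hr₂.2
    calc Real.sqrt r₂ * |Real.sqrt (σ (w₁ z)) - Real.sqrt (σ (w₂ z))|
        ≤ Real.sqrt R * (L * |w₁ z - w₂ z|) :=
          mul_le_mul hsr (hlip _ _) (abs_nonneg _) (Real.sqrt_nonneg _)
    _ = L * Real.sqrt R * |w₁ z - w₂ z| := by ring
    _ ≤ L * Real.sqrt R * ⨆ z' : Z, |w₁ z' - w₂ z'| := by
          apply mul_le_mul_of_nonneg_left hsup (by positivity)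
  linarith
end
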